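/- If a function f : ℝ^n → ℝ^n satisfies the incremental sector bound condition [y₁ - y₂; f(y₁) - f(y₂)]ᵀ M [y₁ - y₂; f(y₁) - f(y₂)] ≥ 0 for all y₁, y₂ ∈ ℝ^n, where M is the block matrix [[-(U₁U₂ + (U₁U₂)ᵀ), U₁ + U₂], [(U₁ + U₂)ᵀ, -I]] with given matrices U₂ ≻ U₁ ⪰ 0, then f is globally Lipschitz continuous. -/
import Mathlib


open Matrix Real

lemma aux_dot_bound {n : ℕ} (A : Matrix (Fin n) (Fin n) ℝ) (x y : Fin n → ℝ) :
    x ⬝ᵥ A.mulVec y ≤ (∑ i, ∑ j, |A i j|) *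
      (Real.sqrt (∑ i, x i ^ 2) * Real.sqrt (∑ i, y i ^ 2)) := by
  have hx : ∀ i, |x i| ≤ Real.sqrt (∑ i, x i ^ 2) := by
    intro i
    rw [← Real.sqrt_sq_eq_abs]
    exact Real.sqrt_le_sqrt (Finset.single_le_sum (fun j _ => sq_nonneg (x j)) (Finset.mem_univ i))
  have hy : ∀ j, |y j| ≤ Real.sqrt (∑ i, y i ^ 2) := by
    intro j
    rw [← Real.sqrt_sq_eq_abs]
    exact Real.sqrt_le_sqrt (Finset.single_le_sum (fun i _ => sq_nonneg (y i)) (Finset.mem_univ j))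
  have h1 : x ⬝ᵥ A.mulVec y = ∑ i, ∑ j, x i * A i j * y j := by
    simp [dotProduct, Matrix.mulVec, Finset.mul_sum, mul_assoc]
  rw [h1, Finset.sum_mul]
  apply Finset.sum_le_sum
  intro i _
  rw [Finset.sum_mul]
  apply Finset.sum_le_sum
  intro j _
  calc x i * A i j * y j ≤ |x i * A i j * y j| := le_abs_self _
    _ = |A i j| * (|x i| * |y j|) := by rw [abs_mul, abs_mul]; ring
    _ ≤ |A i j| * (Real.sqrt (∑ i, x i ^ 2) * Real.sqrt (∑ i, y i ^ 2)) := by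
        apply mul_le_mul_of_nonneg_left _ (abs_nonneg _)
        exact mul_le_mul (hx i) (hy j) (abs_nonneg _) (Real.sqrt_nonneg _)

/-- If `f : ℝⁿ → ℝⁿ` satisfies the incremental sector bound condition with
matrices `U₂ ≻ U₁ ⪰ 0`, then `f` is globally Lipschitz continuous
(Euclidean norms). -/
theorem stmt0 {n : ℕ} (U₁ U₂ : Matrix (Fin n) (Fin n) ℝ)
    (hU₁ : U₁.PosSemidef) (hU₂ : (U₂ - U₁).PosDef)
    (f : (Fin n → ℝ) → Fin n → ℝ)
    (hsec : ∀ y₁ y₂ : Fin n → ℝ,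
      0 ≤ -((f y₁ - f y₂) ⬝ᵥ (f y₁ - f y₂))
          - (y₁ - y₂) ⬝ᵥ ((U₁ * U₂ + (U₁ * U₂)ᵀ).mulVec (y₁ - y₂))
          + 2 * ((y₁ - y₂) ⬝ᵥ ((U₁ + U₂).mulVec (f y₁ - f y₂)))) :
    ∃ L : ℝ, 0 ≤ L ∧ ∀ y₁ y₂ : Fin n → ℝ,
      Real.sqrt (∑ i, (f y₁ i - f y₂ i)^2) ≤ L * Real.sqrt (∑ i, (y₁ i - y₂ i)^2) := by
  set A := U₁ * U₂ + (U₁ * U₂)ᵀ with hA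
  set B := U₁ + U₂ with hB
  set K : ℝ := ∑ i, ∑ j, |A i j| with hK
  set Kb : ℝ := ∑ i, ∑ j, |B i j| with hKb
  have hK0 : 0 ≤ K := Finset.sum_nonneg fun i _ =>
    Finset.sum_nonneg fun j _ => abs_nonneg _
  have hKb0 : 0 ≤ Kb := Finset.sum_nonneg fun i _ =>
    Finset.sum_nonneg fun j _ => abs_nonneg _
  refine ⟨Real.sqrt (2 * K + 4 * Kb ^ 2), Real.sqrt_nonneg _, fun y₁ y₂ => ?_⟩
  set u : Fin n → ℝ := y₁ - y₂ with hu
  set v : Fin n → ℝ := f y₁ - f y₂ with hv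
  set a : ℝ := Real.sqrt (∑ i, v i ^ 2) with ha
  set b : ℝ := Real.sqrt (∑ i, u i ^ 2) with hb
  have ha0 : 0 ≤ a := Real.sqrt_nonneg _
  have hb0 : 0 ≤ b := Real.sqrt_nonneg _
  have ha2 : a ^ 2 = ∑ i, v i ^ 2 := Real.sq_sqrt (Finset.sum_nonneg fun i _ => sq_nonneg _)
  have hb2 : b ^ 2 = ∑ i, u i ^ 2 := Real.sq_sqrt (Finset.sum_nonneg fun i _ => sq_nonneg _)
  have hvv : v ⬝ᵥ v = a ^ 2 := by
    rw [ha2]; simp [dotProduct, sq]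
  -- the two bounds
  have hAb : -(u ⬝ᵥ A.mulVec u) ≤ K * (b * b) := by
    have := aux_dot_bound (-A) u u
    simpa [Matrix.neg_mulVec, dotProduct_neg, ← hK] using this
  have hBb : u ⬝ᵥ B.mulVec v ≤ Kb * (b * a) := by
    have := aux_dot_bound B u v
    simpa [← hKb] using this
  have hs := hsec y₁ y₂
  rw [hvv] at hs
  have key : a ^ 2 ≤ (2 * K + 4 * Kb ^ 2) * b ^ 2 := by
    nlinarith [sq_nonneg (a - 2 * Kb * b), sq_nonneg a, sq_nonneg b]
  show a ≤ Real.sqrt (2 * K + 4 * Kb ^ 2) * b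
  calc a = Real.sqrt (a ^ 2) := (Real.sqrt_sq ha0).symm
    _ ≤ Real.sqrt ((2 * K + 4 * Kb ^ 2) * b ^ 2) := Real.sqrt_le_sqrt key
    _ = Real.sqrt (2 * K + 4 * Kb ^ 2) * b := by
        rw [Real.sqrt_mul (by positivity), Real.sqrt_sq hb0]
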